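/- If S ≥ 12D + 3(1 + ln D)·M·m² + 6D·ln(N/S), then there exists a table T : [N] × [N] → [M] that is (S,D)-rainbow balanced. -/

import Mathlib

/-- The family `𝒜_D`: sets of colors `A ⊆ [M]` with `M/D ≤ |A| ≤ (M/D)·m²`. -/
def InAD (M D m : ℕ) (A : Finset (Fin M)) : Prop :=
  (M : ℝ) / D ≤ (A.card : ℝ) ∧ (A.card : ℝ) ≤ (M : ℝ) / D * m ^ 2

/-- Number of cells `(u, v) ∈ B₁ × B₂` properly colored with respect to columns:
`T(u,v) ∈ A_v`. -/
def properCountCols {N M : ℕ} (T : Fin N × Fin N → Fin M)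
    (B₁ B₂ : Finset (Fin N)) (A : Fin N → Finset (Fin M)) : ℕ :=
  ((B₁ ×ˢ B₂).filter (fun c => T c ∈ A c.2)).card

/-- Number of cells `(u, v) ∈ B₁ × B₂` properly colored with respect to rows:
`T(u,v) ∈ A_u`. -/
def properCountRows {N M : ℕ} (T : Fin N × Fin N → Fin M)
    (B₁ B₂ : Finset (Fin N)) (A : Fin N → Finset (Fin M)) : ℕ :=
  ((B₁ ×ˢ B₂).filter (fun c => T c ∈ A c.1)).card

/-- A table `T : [N] × [N] → [M]` is `(S,D)`-rainbow balanced. -/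
def RainbowBalanced (N M S D m : ℕ) (T : Fin N × Fin N → Fin M) : Prop :=
  (∀ B₁ B₂ : Finset (Fin N), (∃ k : ℕ, 0 < k ∧ B₁.card = k * S) → B₂.card = S →
    ∀ A : Fin N → Finset (Fin M), (∀ v ∈ B₂, InAD M D m (A v)) →
      (properCountCols T B₁ B₂ A : ℝ) ≤ 2 * m ^ 2 * B₁.card * B₂.card / D) ∧
  (∀ B₁ B₂ : Finset (Fin N), B₁.card = S → (∃ k : ℕ, 0 < k ∧ B₂.card = k * S) →
    ∀ A : Fin N → Finset (Fin M), (∀ u ∈ B₁, InAD M D m (A u)) →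
      (properCountRows T B₁ B₂ A : ℝ) ≤ 2 * m ^ 2 * B₁.card * B₂.card / D)


open Nat

lemma prod_ite_two_one {α : Type*} (C : Finset α) (P : α → Prop) [DecidablePred P] :
    ∏ c ∈ C, (if P c then (2:ℝ) else 1) = 2 ^ (C.filter P).card := by
  rw [Finset.prod_ite, Finset.prod_const, Finset.prod_const, one_pow, mul_one]

lemma tail_bound {N M : ℕ} (hM : 0 < M) (C : Finset (Fin N × Fin N))
    (A : Fin N × Fin N → Finset (Fin M)) (p t : ℝ) (hp0 : 0 ≤ p)
    (hp : ∀ c ∈ C, ((A c).card : ℝ) ≤ p * M) :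
    ((Finset.univ.filter (fun T : Fin N × Fin N → Fin M =>
        t ≤ ((C.filter (fun c => T c ∈ A c)).card : ℝ))).card : ℝ)
      ≤ (Fintype.card (Fin N × Fin N → Fin M) : ℝ) *
          Real.exp (p * C.card - t * Real.log 2) := by
  classical
  set Ω := (Fin N × Fin N → Fin M)
  set Bad := (Finset.univ.filter (fun T : Ω =>
        t ≤ ((C.filter (fun c => T c ∈ A c)).card : ℝ))) with hBad
  have key1 : (Bad.card : ℝ) * Real.exp (t * Real.log 2)
      ≤ ∑ T : Ω, ∏ c ∈ C, (if T c ∈ A c then (2:ℝ) else 1) := by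
    have h1 : ∀ T ∈ Bad, Real.exp (t * Real.log 2)
        ≤ ∏ c ∈ C, (if T c ∈ A c then (2:ℝ) else 1) := by
      intro T hT
      rw [hBad, Finset.mem_filter] at hT
      rw [prod_ite_two_one]
      have h2 : (2:ℝ) ^ (C.filter (fun c => T c ∈ A c)).card
          = Real.exp (((C.filter (fun c => T c ∈ A c)).card : ℝ) * Real.log 2) := by
        rw [← Real.rpow_natCast 2, Real.rpow_def_of_pos (by norm_num : (0:ℝ) < 2), mul_comm]
      rw [h2]
      exact Real.exp_le_exp.2 (by nlinarith [hT.2, Real.log_pos (show (1:ℝ) < 2 by norm_num)])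
    calc (Bad.card : ℝ) * Real.exp (t * Real.log 2)
        = ∑ _T ∈ Bad, Real.exp (t * Real.log 2) := by rw [Finset.sum_const, nsmul_eq_mul]
      _ ≤ ∑ T ∈ Bad, ∏ c ∈ C, (if T c ∈ A c then (2:ℝ) else 1) := Finset.sum_le_sum h1
      _ ≤ ∑ T : Ω, ∏ c ∈ C, (if T c ∈ A c then (2:ℝ) else 1) := by
          apply Finset.sum_le_sum_of_subset_of_nonneg (Finset.subset_univ _)
          intro T _ _
          exact Finset.prod_nonneg (fun c _ => by split <;> norm_num)
  have key2 : ∑ T : Ω, ∏ c ∈ C, (if T c ∈ A c then (2:ℝ) else 1)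
      ≤ (Fintype.card Ω : ℝ) * Real.exp (p * C.card) := by
    have hrw : ∀ T : Ω, ∏ c ∈ C, (if T c ∈ A c then (2:ℝ) else 1)
        = ∏ c : Fin N × Fin N, (if c ∈ C then (if T c ∈ A c then (2:ℝ) else 1) else 1) := by
      intro T
      rw [← Finset.prod_subset (Finset.subset_univ C) (fun c _ hc => by simp [hc])]
      exact Finset.prod_congr rfl (fun c hc => by simp [hc])
    simp_rw [hrw]
    have hfac : ∑ T : Ω, ∏ c : Fin N × Fin N,
          (if c ∈ C then (if T c ∈ A c then (2:ℝ) else 1) else 1)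
        = ∏ c : Fin N × Fin N, ∑ x : Fin M,
          (if c ∈ C then (if x ∈ A c then (2:ℝ) else 1) else 1) := by
      rw [Finset.prod_univ_sum (fun _ => (Finset.univ : Finset (Fin M)))]
      rw [Fintype.piFinset_univ]
    rw [hfac]
    have hcol : ∀ c : Fin N × Fin N, ∑ x : Fin M,
        (if c ∈ C then (if x ∈ A c then (2:ℝ) else 1) else 1)
        = if c ∈ C then ((M : ℝ) + (A c).card) else (M : ℝ) := by
      intro c
      by_cases hc : c ∈ C
      · simp only [hc, if_true]
        have : ∀ x : Fin M, (if x ∈ A c then (2:ℝ) else 1) = 1 + (if x ∈ A c then (1:ℝ) else 0) := by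
          intro x; split <;> norm_num
        simp_rw [this, Finset.sum_add_distrib, Finset.sum_const, Finset.sum_ite_mem,
          Finset.univ_inter, Finset.sum_const]
        simp [Finset.card_univ]
      · simp [hc, Finset.card_univ]
    simp_rw [hcol]
    have hbound : ∀ c : Fin N × Fin N,
        (if c ∈ C then ((M : ℝ) + (A c).card) else (M : ℝ))
        ≤ (M : ℝ) * Real.exp (if c ∈ C then p else 0) := by
      intro c
      by_cases hc : c ∈ C
      · simp only [hc, if_true]
        calc (M : ℝ) + (A c).card ≤ (M:ℝ) + p * M := by linarith [hp c hc]
          _ = (M:ℝ) * (p + 1) := by ring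
          _ ≤ (M:ℝ) * Real.exp p := by
              apply mul_le_mul_of_nonneg_left (Real.add_one_le_exp p) (by positivity)
      · simp [hc]
    calc ∏ c : Fin N × Fin N, (if c ∈ C then ((M : ℝ) + (A c).card) else (M : ℝ))
        ≤ ∏ c : Fin N × Fin N, (M : ℝ) * Real.exp (if c ∈ C then p else 0) := by
          apply Finset.prod_le_prod
          · intro c _; split <;> positivity
          · intro c _; exact hbound c
      _ = (Fintype.card Ω : ℝ) * Real.exp (p * C.card) := by
          rw [Finset.prod_mul_distrib, Finset.prod_const, ← Real.exp_sum]
          have h1 : ∑ c : Fin N × Fin N, (if c ∈ C then p else 0) = p * C.card := by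
            rw [Finset.sum_ite_mem, Finset.univ_inter, Finset.sum_const, nsmul_eq_mul, mul_comm]
          rw [h1, Finset.card_univ]
          congr 2
          have : Fintype.card Ω = M ^ (Fintype.card (Fin N × Fin N)) := by
            rw [Fintype.card_fun]; congr 1; exact Fintype.card_fin M
          rw [this]
          push_cast
          rfl
  have hexp : (0:ℝ) < Real.exp (t * Real.log 2) := Real.exp_pos _
  have final : (Bad.card : ℝ) ≤ (Fintype.card Ω : ℝ) * Real.exp (p * C.card)
      / Real.exp (t * Real.log 2) := by
    rw [le_div_iff₀ hexp]; exact key1.trans key2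

  calc (Bad.card : ℝ) ≤ (Fintype.card Ω : ℝ) * Real.exp (p * C.card)
      / Real.exp (t * Real.log 2) := final
    _ = (Fintype.card Ω : ℝ) * Real.exp (p * C.card - t * Real.log 2) := by
        rw [Real.exp_sub, mul_div_assoc]

lemma choose_le_exp {n j : ℕ} (hn : 0 < n) (hj : 0 < j) :
    ((n.choose j : ℝ)) ≤ Real.exp (j * (1 + Real.log n - Real.log j)) := by
  have h1 : (n.choose j : ℝ) ≤ (n:ℝ)^j / (j ! : ℝ) := Nat.choose_le_pow_div j n
  have h2 : ((j:ℝ))^j / (j ! : ℝ) ≤ Real.exp j :=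
    Real.pow_div_factorial_le_exp (j:ℝ) (Nat.cast_nonneg j) j
  have hf : (0:ℝ) < (j ! : ℝ) := by exact_mod_cast Nat.factorial_pos j
  have hj0 : (0:ℝ) < j := by exact_mod_cast hj
  have hn0 : (0:ℝ) < n := by exact_mod_cast hn
  have key : (n.choose j : ℝ) ≤ ((n:ℝ)/j)^j * Real.exp j := by
    calc (n.choose j : ℝ) ≤ (n:ℝ)^j / (j ! : ℝ) := h1
      _ = ((n:ℝ)/j)^j * ((j:ℝ)^j / (j ! : ℝ)) := by
          rw [div_pow]; field_simp
      _ ≤ ((n:ℝ)/j)^j * Real.exp j := by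
          apply mul_le_mul_of_nonneg_left h2 (by positivity)
  calc (n.choose j : ℝ) ≤ ((n:ℝ)/j)^j * Real.exp j := key
    _ = Real.exp (j * (1 + Real.log n - Real.log j)) := by
        symm
        rw [Real.exp_nat_mul]
        rw [show (1 + Real.log n - Real.log j : ℝ) = 1 + (Real.log n - Real.log j) by ring,
          Real.exp_add, Real.exp_sub, Real.exp_log hn0, Real.exp_log hj0, mul_pow,
          Real.exp_one_pow]
        ring

lemma choose_mono_left {n j a : ℕ} (hja : j ≤ a) (ha : 2 * a ≤ n) :
    n.choose j ≤ n.choose a := by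
  have ha2 : a ≤ n / 2 := Nat.le_div_iff_mul_le (by norm_num) |>.2 (by omega)
  induction hja using Nat.decreasingInduction with
  | self => exact le_refl _
  | of_succ k hk ih =>
      exact le_trans (Nat.choose_le_succ_of_lt_half_left (by omega)) ih

/-- The family `𝒜_D` as a `Finset`. -/
noncomputable def AF (M D m : ℕ) : Finset (Finset (Fin M)) :=
  @Finset.filter _ (InAD M D m) (Classical.decPred _) Finset.univ

lemma mem_AF {M D m : ℕ} {A : Finset (Fin M)} : A ∈ AF M D m ↔ InAD M D m A := by
  classical
  simp [AF]

lemma AF_card_le (M D m : ℕ) (h2a : 2 * ⌊(M:ℝ)/D * (m:ℝ)^2⌋₊ ≤ M) :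
    (AF M D m).card ≤
      (Finset.Icc ⌈(M:ℝ)/D⌉₊ ⌊(M:ℝ)/D * (m:ℝ)^2⌋₊).card * M.choose ⌊(M:ℝ)/D * (m:ℝ)^2⌋₊ := by
  classical
  set a := ⌊(M:ℝ)/D * (m:ℝ)^2⌋₊
  set amin := ⌈(M:ℝ)/D⌉₊
  have hsub : AF M D m ⊆ (Finset.Icc amin a).biUnion
      (fun j => Finset.powersetCard j (Finset.univ : Finset (Fin M))) := by
    intro A hA
    rw [mem_AF] at hA
    rw [Finset.mem_biUnion]
    refine ⟨A.card, ?_, ?_⟩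
    · rw [Finset.mem_Icc]
      exact ⟨Nat.ceil_le.2 hA.1, Nat.le_floor hA.2⟩
    · exact Finset.mem_powersetCard_univ.2 rfl
  calc (AF M D m).card ≤ ((Finset.Icc amin a).biUnion
      (fun j => Finset.powersetCard j (Finset.univ : Finset (Fin M)))).card :=
        Finset.card_le_card hsub
    _ ≤ ∑ j ∈ Finset.Icc amin a, (Finset.powersetCard j (Finset.univ : Finset (Fin M))).card :=
        Finset.card_biUnion_le
    _ ≤ ∑ _j ∈ Finset.Icc amin a, M.choose a := by
        apply Finset.sum_le_sum
        intro j hj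
        rw [Finset.card_powersetCard, Finset.card_univ, Fintype.card_fin]
        exact choose_mono_left (Finset.mem_Icc.1 hj).2 h2a
    _ = (Finset.Icc amin a).card * M.choose a := by
        rw [Finset.sum_const, smul_eq_mul]

lemma key_m2_ineq {c lD m2 : ℝ} (hc : 0.386 < c) (hlD : 0 ≤ lD)
    (hln2' : Real.log 2 ≤ 1) (hm4 : 4 ≤ m2) :
    2 + Real.log 2 + lD ≤ 3 * c * (1 + lD) * m2 := by
  have h3c : (1.158:ℝ) ≤ 3 * c := by linarith
  have hx : (4.6:ℝ) ≤ 3 * c * m2 := by nlinarith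
  have hxD := mul_le_mul_of_nonneg_right hx hlD
  nlinarith [hx, hxD]

set_option maxHeartbeats 1000000 in
lemma AF_log_le (M D m : ℕ) (hM0 : 0 < M) (hD2 : 2 * m ^ 2 < D)
    (hAFpos : 0 < (AF M D m).card) :
    Real.log ((AF M D m).card) ≤
      (2*Real.log 2 - 1) * (m:ℝ)^2 * (3 * (1 + Real.log D) * (M:ℝ) * (m:ℝ)^2 / D) := by
  have hD : 0 < D := Nat.lt_of_le_of_lt (Nat.zero_le _) hD2
  have hD0 : (0:ℝ) < D := by exact_mod_cast hD
  have hMr : (0:ℝ) < M := by exact_mod_cast hM0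
  obtain ⟨A₀, hA₀⟩ := Finset.card_pos.1 hAFpos
  rw [mem_AF] at hA₀
  have hm : 1 ≤ m := by
    by_contra hm0
    have hmz : m = 0 := by omega
    subst hmz
    have h1 : (M:ℝ)/D ≤ A₀.card := hA₀.1
    have h2 : (A₀.card:ℝ) ≤ (M:ℝ)/D * ((0:ℕ):ℝ)^2 := hA₀.2
    have h3 : (0:ℝ) < (M:ℝ)/D := by positivity
    norm_num at h2
    rw [h2] at h1
    simp at h1
    linarith
  have hmr : (1:ℝ) ≤ m := by exact_mod_cast hm
  set c : ℝ := 2*Real.log 2 - 1 with hc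
  have hln2 : (0.6931:ℝ) < Real.log 2 := by
    have := Real.log_two_gt_d9; linarith
  have hln2' : Real.log 2 ≤ 1 := by
    have := Real.log_le_sub_one_of_pos (show (0:ℝ) < 2 by norm_num); linarith
  have hcpos : (0.386:ℝ) < c := by rw [hc]; linarith
  have hlogD : (0:ℝ) ≤ Real.log D := Real.log_nonneg (by exact_mod_cast hD)
  set α : ℝ := (M:ℝ)/D * (m:ℝ)^2 with hα
  set a : ℕ := ⌊α⌋₊ with ha
  set amin : ℕ := ⌈(M:ℝ)/D⌉₊ with hamin
  have hαpos : 0 < α := by positivity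
  have haminpos : 1 ≤ amin := by
    rw [hamin]
    exact Nat.one_le_ceil_iff.2 (by positivity)
  have hcard_le_a : A₀.card ≤ a := Nat.le_floor hA₀.2
  have hamin_le_a : amin ≤ a := by
    have h1 : amin ≤ A₀.card := Nat.ceil_le.2 hA₀.1
    omega
  have ha1 : 1 ≤ a := le_trans haminpos hamin_le_a
  have har : (1:ℝ) ≤ a := by exact_mod_cast ha1
  have haα : (a:ℝ) ≤ α := Nat.floor_le (le_of_lt hαpos)
  have h2αM : 2 * α < M := by
    have hd : (2:ℝ)*m^2 < D := by exact_mod_cast hD2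
    rw [hα, div_mul_eq_mul_div, ← mul_div_assoc, div_lt_iff₀ hD0]
    have h5 := mul_lt_mul_of_pos_left hd hMr
    nlinarith [h5]
  have h2a : 2 * a ≤ M := by
    have : ((2*a : ℕ):ℝ) < (M:ℝ) := by push_cast; nlinarith
    exact_mod_cast this.le
  have haM : a ≤ M := by omega
  set L : ℝ := Real.log ((AF M D m).card) with hL
  have hAF1 : (1:ℝ) ≤ ((AF M D m).card : ℝ) := by exact_mod_cast hAFpos
  have hchoosepos : 0 < M.choose a := Nat.choose_pos haM
  have hchooseposr : (0:ℝ) < (M.choose a : ℝ) := by exact_mod_cast hchoosepos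
  have hIccCard : (Finset.Icc amin a).card = a + 1 - amin := Nat.card_Icc amin a
  have hIccpos : 1 ≤ (Finset.Icc amin a).card := by rw [hIccCard]; omega
  have hIccposr : (1:ℝ) ≤ ((Finset.Icc amin a).card : ℝ) := by exact_mod_cast hIccpos
  have hLle : L ≤ Real.log ((Finset.Icc amin a).card) + Real.log (M.choose a) := by
    rw [hL, ← Real.log_mul (by linarith) (ne_of_gt hchooseposr)]
    apply Real.log_le_log (by exact_mod_cast hAFpos)
    have h7 := (Nat.cast_le (α := ℝ)).2 (AF_card_le M D m h2a)
    rw [Nat.cast_mul] at h7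
    exact h7
  have hlogchoose : Real.log (M.choose a) ≤ a * (1 + Real.log M - Real.log a) := by
    rw [Real.log_le_iff_le_exp hchooseposr]
    exact choose_le_exp hM0 ha1
  show L ≤ c * (m:ℝ)^2 * (3 * (1 + Real.log D) * (M:ℝ) * (m:ℝ)^2 / D)
  have hcmQ : c * (m:ℝ)^2 * (3 * (1 + Real.log D) * (M:ℝ) * (m:ℝ)^2 / D)
      = 3 * c * (1 + Real.log D) * ((M:ℝ)/D) * (m:ℝ)^4 := by
    field_simp
  rw [hcmQ]
  rcases eq_or_lt_of_le hm with hm1 | hm2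
  · -- m = 1
    have hm1 : m = 1 := hm1.symm
    subst hm1
    have hαa : α = (M:ℝ)/D := by rw [hα]; norm_num
    have haup : (a:ℝ) ≤ (M:ℝ)/D := by rw [← hαa]; exact haα
    have hadown : (M:ℝ)/D ≤ a := by
      calc (M:ℝ)/D ≤ A₀.card := hA₀.1
        _ ≤ a := by exact_mod_cast hcard_le_a
    have haeq : (a:ℝ) = (M:ℝ)/D := le_antisymm haup hadown
    have hIcc1 : Real.log ((Finset.Icc amin a).card) = 0 := by
      have haamin : a ≤ amin := by
        have : (a:ℝ) ≤ (amin:ℝ) := by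
          rw [haeq, hamin]; exact Nat.le_ceil _
        exact_mod_cast this
      have : (Finset.Icc amin a).card = 1 := by omega
      rw [this]; norm_num
    have hloga : Real.log a = Real.log M - Real.log D := by
      rw [haeq, Real.log_div (ne_of_gt hMr) (ne_of_gt hD0)]
    have hbnd : L ≤ (a:ℝ) * (1 + Real.log D) := by
      rw [hIcc1] at hLle
      rw [hloga] at hlogchoose
      calc L ≤ 0 + Real.log (M.choose a) := hLle
        _ ≤ a * (1 + Real.log M - (Real.log M - Real.log D)) := by linarith
        _ = (a:ℝ) * (1 + Real.log D) := by ring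
    have hMD : (0:ℝ) < (M:ℝ)/D := by positivity
    calc L ≤ (a:ℝ) * (1 + Real.log D) := hbnd
      _ = ((M:ℝ)/D) * (1 + Real.log D) := by rw [haeq]
      _ ≤ 3 * c * (1 + Real.log D) * ((M:ℝ)/D) * ((1:ℕ):ℝ) ^ 4 := by
          have h1 : (1:ℝ) ≤ 3 * c := by linarith
          have h2 : (0:ℝ) ≤ (1 + Real.log D) * ((M:ℝ)/D) := by positivity
          have h3 := mul_le_mul_of_nonneg_right h1 h2
          push_cast
          nlinarith [h3]
  · -- m ≥ 2
    have hm2r : (2:ℝ) ≤ m := by exact_mod_cast hm2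
    have hIccle : Real.log ((Finset.Icc amin a).card) ≤ (a:ℝ) := by
      have h1 : (Finset.Icc amin a).card ≤ a := by omega
      calc Real.log ((Finset.Icc amin a).card) ≤ Real.log (a:ℝ) :=
            Real.log_le_log (by linarith) (by exact_mod_cast h1)
        _ ≤ (a:ℝ) - 1 := Real.log_le_sub_one_of_pos (by linarith)
        _ ≤ (a:ℝ) := by linarith
    have hαM : (M:ℝ)/D ≤ α := by
      have hm2' : (1:ℝ) ≤ (m:ℝ)^2 := by nlinarith [hmr]
      have hx : (0:ℝ) ≤ (M:ℝ)/D := by positivity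
      rw [hα]
      nlinarith [mul_le_mul_of_nonneg_left hm2' hx]
    have hahalf : α/2 ≤ (a:ℝ) := by
      have hfl : α - 1 < (a:ℝ) := by
        have := Nat.sub_one_lt_floor α
        exact_mod_cast this
      rcases le_or_gt 2 α with h2 | h2
      · linarith
      · linarith
    have hlogalow : Real.log M - Real.log 2 - Real.log D ≤ Real.log a := by
      have h1 : (M:ℝ)/(2*D) ≤ (a:ℝ) := by
        have he : (M:ℝ)/(2*D) = ((M:ℝ)/D)/2 := by ring
        rw [he]; linarith
      calc Real.log M - Real.log 2 - Real.log D
          = Real.log ((M:ℝ)/(2*D)) := by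
            rw [Real.log_div (ne_of_gt hMr) (by positivity),
              Real.log_mul (by norm_num) (ne_of_gt hD0)]
            ring
        _ ≤ Real.log a := Real.log_le_log (by positivity) h1
    have hbnd : L ≤ (a:ℝ) * (2 + Real.log 2 + Real.log D) := by
      calc L ≤ (a:ℝ) + (a:ℝ) * (1 + Real.log M - Real.log a) := by linarith
        _ ≤ (a:ℝ) + (a:ℝ) * (1 + Real.log 2 + Real.log D) := by
            have h9 : (1:ℝ) + Real.log M - Real.log a ≤ 1 + Real.log 2 + Real.log D := by
              linarith
            nlinarith [har, h9]
        _ = (a:ℝ) * (2 + Real.log 2 + Real.log D) := by ring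
    have hm4 : (4:ℝ) ≤ (m:ℝ)^2 := by nlinarith [hm2r]
    have hαa2 : (a:ℝ) ≤ ((M:ℝ)/D) * (m:ℝ)^2 := by rw [← hα]; exact haα
    have hMD : (0:ℝ) < (M:ℝ)/D := by positivity
    calc L ≤ (a:ℝ) * (2 + Real.log 2 + Real.log D) := hbnd
      _ ≤ (((M:ℝ)/D) * (m:ℝ)^2) * (2 + Real.log 2 + Real.log D) := by
          apply mul_le_mul_of_nonneg_right hαa2
          linarith
      _ ≤ 3 * c * (1 + Real.log D) * ((M:ℝ)/D) * (m:ℝ)^4 := by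
          have key : 2 + Real.log 2 + Real.log D ≤ 3 * c * (1 + Real.log D) * (m:ℝ)^2 :=
            key_m2_ineq hcpos hlogD hln2' hm4
          calc (((M:ℝ)/D) * (m:ℝ)^2) * (2 + Real.log 2 + Real.log D)
              ≤ (((M:ℝ)/D) * (m:ℝ)^2) * (3 * c * (1 + Real.log D) * (m:ℝ)^2) := by
                apply mul_le_mul_of_nonneg_left key (by positivity)
            _ = 3 * c * (1 + Real.log D) * ((M:ℝ)/D) * ((m:ℝ)^2 * (m:ℝ)^2) := by ring
            _ = 3 * c * (1 + Real.log D) * ((M:ℝ)/D) * (m:ℝ)^4 := by ring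

lemma scalar_ineq (c σ L Q Sr Dr kr m2 l2 : ℝ) (hc : 0.386 < c) (hσ : 0 ≤ σ)
    (hL : 0 ≤ L) (hQ : 0 ≤ Q) (hLQ : L ≤ c * m2 * Q) (hm2 : 1 ≤ m2) (hk : 1 ≤ kr)
    (hS36 : 36 ≤ Sr) (hl2 : 0 < l2) (hl2' : l2 ≤ 1)
    (hSD : 12 + Q + 6 * σ ≤ Sr / Dr) (hD : 0 < Dr) :
    (kr * Sr) * (1 + σ) + Sr * (1 + σ) + Sr * L + (kr + 3) * l2
      ≤ c * m2 * kr * Sr ^ 2 / Dr := by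
  set u : ℝ := kr * Sr with hu
  have hu36 : 36 ≤ u := by nlinarith
  have hu0 : (0:ℝ) < u := by linarith
  have step1 : Sr * L ≤ u * (c * m2 * Q) := by
    have h1 : Sr * L ≤ Sr * (c * m2 * Q) :=
      mul_le_mul_of_nonneg_left hLQ (by linarith)
    have h2 : Sr * (c * m2 * Q) ≤ u * (c * m2 * Q) := by
      apply mul_le_mul_of_nonneg_right _ (by positivity)
      rw [hu]; nlinarith
    linarith
  have step2 : (kr + 3) * l2 ≤ u / 9 := by
    have h1 : (kr + 3) * l2 ≤ kr + 3 := by nlinarith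
    have h2 : kr + 3 ≤ 4 * kr := by linarith
    have h3 : 4 * kr ≤ u / 9 := by rw [hu]; nlinarith
    linarith
  have step3 : Sr * (1 + σ) ≤ u * (1 + σ) := by
    apply mul_le_mul_of_nonneg_right _ (by linarith)
    rw [hu]; nlinarith
  have step4 : u * (2 + 2 * σ + 1 / 9) ≤ u * (12 * c * m2 + 6 * c * m2 * σ) := by
    apply mul_le_mul_of_nonneg_left _ (le_of_lt hu0)
    have hc0 : (0:ℝ) < c := lt_trans (by norm_num) hc
    have hcm : (0.386:ℝ) ≤ c * m2 := by nlinarith [mul_le_mul_of_nonneg_left hm2 hc0.le]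
    nlinarith [hcm, hσ, mul_le_mul_of_nonneg_right hcm hσ]
  have step5 : u * (12 * c * m2 + 6 * c * m2 * σ) + u * (c * m2 * Q)
      = u * (c * m2 * (12 + Q + 6 * σ)) := by ring
  have step6 : u * (c * m2 * (12 + Q + 6 * σ)) ≤ u * (c * m2 * (Sr / Dr)) := by
    apply mul_le_mul_of_nonneg_left _ (le_of_lt hu0)
    apply mul_le_mul_of_nonneg_left hSD (by positivity)
  have step7 : u * (c * m2 * (Sr / Dr)) = c * m2 * kr * Sr ^ 2 / Dr := by
    rw [hu]; field_simp
  calc (kr * Sr) * (1 + σ) + Sr * (1 + σ) + Sr * L + (kr + 3) * l2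
      ≤ u * (1 + σ) + u * (1 + σ) + u * (c * m2 * Q) + u / 9 := by
        rw [hu] at step1 step2 step3 ⊢
        linarith [step1, step2, step3]
    _ = u * (2 + 2 * σ + 1 / 9) + u * (c * m2 * Q) := by ring
    _ ≤ u * (12 * c * m2 + 6 * c * m2 * σ) + u * (c * m2 * Q) := by linarith [step4]
    _ = u * (c * m2 * (12 + Q + 6 * σ)) := step5
    _ ≤ u * (c * m2 * (Sr / Dr)) := step6
    _ = c * m2 * kr * Sr ^ 2 / Dr := step7

set_option maxHeartbeats 1000000 in
lemma per_k (n m S D k : ℕ) (hS : 0 < S) (hD2 : 2 * m ^ 2 < D) (hk : 1 ≤ k)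
    (hSN : S ≤ 2 ^ n)
    (h : 12 * (D : ℝ) + 3 * (1 + Real.log D) * (2 ^ m : ℝ) * m ^ 2
        + 6 * D * Real.log ((2 ^ n : ℝ) / S) ≤ (S : ℝ)) :
    (((2^n).choose (k*S) : ℝ)) * (((2^n).choose S : ℝ)) * (((AF (2^m) D m).card : ℝ))^S
      * Real.exp (-((2*Real.log 2 - 1) * m^2 * k * S^2 / D))
      ≤ (1/8) * (1/2)^k := by
  have hD : 0 < D := Nat.lt_of_le_of_lt (Nat.zero_le _) hD2
  have hD0 : (0:ℝ) < D := by exact_mod_cast hD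
  set N : ℕ := 2^n with hNdef
  set M : ℕ := 2^m with hMdef
  have hM0 : 0 < M := Nat.pow_pos (n := m) (by norm_num)
  have hN0 : 0 < N := Nat.pow_pos (n := n) (by norm_num)
  have hMr : (0:ℝ) < M := by exact_mod_cast hM0
  have hNr : (0:ℝ) < N := by exact_mod_cast hN0
  have hMR : ((M:ℕ):ℝ) = (2:ℝ)^m := by rw [hMdef]; push_cast; ring
  have hNR : ((N:ℕ):ℝ) = (2:ℝ)^n := by rw [hNdef]; push_cast; ring
  have h' : 12 * (D : ℝ) + 3 * (1 + Real.log D) * (M : ℝ) * m ^ 2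
      + 6 * D * Real.log ((N : ℝ) / S) ≤ (S : ℝ) := by
    rw [hMR, hNR]; exact h
  clear h
  by_cases hAF0 : (AF M D m).card = 0
  · rw [hAF0]
    push_cast
    rw [zero_pow (by omega : S ≠ 0)]
    simp only [mul_zero, zero_mul]
    positivity
  by_cases hkSN : N < k * S
  · rw [Nat.choose_eq_zero_of_lt hkSN]
    simp only [Nat.cast_zero, zero_mul]
    positivity
  push_neg at hkSN
  have hAFpos : 0 < (AF M D m).card := Nat.pos_of_ne_zero hAF0
  have hm : 1 ≤ m := by
    obtain ⟨A₀, hA₀⟩ := Finset.card_pos.1 hAFpos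
    rw [mem_AF] at hA₀
    by_contra hm0
    have hmz : m = 0 := by omega
    subst hmz
    have h1 : (M:ℝ)/D ≤ A₀.card := hA₀.1
    have h2 : (A₀.card:ℝ) ≤ (M:ℝ)/D * ((0:ℕ):ℝ)^2 := hA₀.2
    have h3 : (0:ℝ) < (M:ℝ)/D := by positivity
    norm_num at h2
    rw [h2] at h1
    simp at h1
    linarith
  have hmr : (1:ℝ) ≤ m := by exact_mod_cast hm
  have hD3 : 3 ≤ D := by nlinarith [hD2, hm]
  set c : ℝ := 2*Real.log 2 - 1 with hc
  have hln2 : (0.6931:ℝ) < Real.log 2 := by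
    have := Real.log_two_gt_d9; linarith
  have hln2' : Real.log 2 ≤ 1 := by
    have := Real.log_le_sub_one_of_pos (show (0:ℝ) < 2 by norm_num); linarith
  have hcpos : (0.386:ℝ) < c := by rw [hc]; linarith
  have hlogD : (0:ℝ) ≤ Real.log D := Real.log_nonneg (by exact_mod_cast hD)
  set σ : ℝ := Real.log ((N:ℝ)/S) with hσdef
  have hσ : (0:ℝ) ≤ σ := by
    apply Real.log_nonneg
    rw [le_div_iff₀ (by exact_mod_cast hS : (0:ℝ) < S), one_mul]
    exact_mod_cast hSN
  have hSr : (1:ℝ) ≤ S := by exact_mod_cast hS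
  have hS12D : 12 * (D:ℝ) ≤ S := by
    have h6 : (0:ℝ) ≤ 6 * D * σ := by positivity
    have hMm : (0:ℝ) ≤ 3 * (1 + Real.log D) * (M:ℝ) * m^2 := by positivity
    linarith
  have hS36 : (36:ℝ) ≤ S := by
    have h9 : (3:ℝ) ≤ D := by exact_mod_cast hD3
    linarith
  set Q : ℝ := 3 * (1 + Real.log D) * (M:ℝ) * m^2 / D with hQdef
  have hQ0 : 0 ≤ Q := by positivity
  have hSD : 12 + Q + 6 * σ ≤ (S:ℝ)/D := by
    rw [hQdef, le_div_iff₀ hD0]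
    have hexp : (12 + 3 * (1 + Real.log D) * (M:ℝ) * (m:ℝ)^2 / (D:ℝ) + 6 * σ) * (D:ℝ)
        = 12 * (D:ℝ) + 3 * (1 + Real.log D) * (M:ℝ) * (m:ℝ)^2 + 6 * (D:ℝ) * σ := by
      field_simp
    rw [hexp]
    exact h'
  set L : ℝ := Real.log ((AF M D m).card) with hL
  have hAF1 : (1:ℝ) ≤ ((AF M D m).card : ℝ) := by exact_mod_cast hAFpos
  have hLnn : 0 ≤ L := Real.log_nonneg hAF1
  have hLkey : L ≤ c * (m:ℝ)^2 * Q := by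
    rw [hL, hc, hQdef]
    exact AF_log_le M D m hM0 hD2 hAFpos
  -- exponential bounds on the binomials
  have hkS0 : 0 < k * S := by positivity
  have hσNS : σ = Real.log N - Real.log S := by
    rw [hσdef, Real.log_div (ne_of_gt hNr) (by positivity)]
  have hch1 : ((N.choose (k*S) : ℝ)) ≤ Real.exp (((k:ℝ)*S) * (1 + σ)) := by
    refine le_trans (choose_le_exp hN0 hkS0) (Real.exp_le_exp.2 ?_)
    have hlogkS : Real.log (S:ℝ) ≤ Real.log ((k*S : ℕ):ℝ) := by
      apply Real.log_le_log (by exact_mod_cast hS)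
      have : S ≤ k * S := Nat.le_mul_of_pos_left S hk
      exact_mod_cast this
    have hkS_cast : ((k*S:ℕ):ℝ) = (k:ℝ)*S := by push_cast; ring
    rw [hkS_cast] at hlogkS ⊢
    have hkr : (1:ℝ) ≤ (k:ℝ) := by exact_mod_cast hk
    have hkSpos : (0:ℝ) < (k:ℝ)*S := by nlinarith
    nlinarith [hσNS, hlogkS, hkSpos]
  have hch2 : ((N.choose S : ℝ)) ≤ Real.exp ((S:ℝ) * (1 + σ)) := by
    refine le_trans (choose_le_exp hN0 hS) (Real.exp_le_exp.2 ?_)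
    rw [hσNS]
    nlinarith [hSr]
  have hAFexp : (((AF M D m).card : ℝ))^S = Real.exp ((S:ℝ) * L) := by
    rw [Real.exp_nat_mul, hL, Real.exp_log (by linarith)]
  have hchain : (((N).choose (k*S) : ℝ)) * (((N).choose S : ℝ)) * (((AF M D m).card : ℝ))^S
      * Real.exp (-(c * m^2 * k * S^2 / D))
      ≤ Real.exp (((k:ℝ)*S) * (1 + σ) + (S:ℝ) * (1 + σ) + (S:ℝ) * L
          + -(c * m^2 * k * S^2 / D)) := by
    rw [hAFexp]
    have c2 : (0:ℝ) ≤ ((N).choose S : ℝ) := Nat.cast_nonneg _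
    have e1 : (0:ℝ) < Real.exp ((S:ℝ) * L) := Real.exp_pos _
    have e2 : (0:ℝ) < Real.exp (-(c * m^2 * k * S^2 / D)) := Real.exp_pos _
    calc ((N).choose (k*S) : ℝ) * ((N).choose S : ℝ) * Real.exp ((S:ℝ) * L)
          * Real.exp (-(c * m^2 * k * S^2 / D))
        ≤ Real.exp (((k:ℝ)*S) * (1 + σ)) * Real.exp ((S:ℝ) * (1 + σ))
          * Real.exp ((S:ℝ) * L) * Real.exp (-(c * m^2 * k * S^2 / D)) := by
          apply mul_le_mul_of_nonneg_right _ (le_of_lt e2)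
          apply mul_le_mul_of_nonneg_right _ (le_of_lt e1)
          exact mul_le_mul hch1 hch2 c2 (le_of_lt (Real.exp_pos _))
      _ = Real.exp (((k:ℝ)*S) * (1 + σ) + (S:ℝ) * (1 + σ) + (S:ℝ) * L
          + -(c * m^2 * k * S^2 / D)) := by
          rw [← Real.exp_add, ← Real.exp_add, ← Real.exp_add]
  have hscalar : ((k:ℝ)*S) * (1 + σ) + (S:ℝ) * (1 + σ) + (S:ℝ) * L
      + ((k:ℝ)+3) * Real.log 2 ≤ c * (m:ℝ)^2 * (k:ℝ) * (S:ℝ)^2 / (D:ℝ) := by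
    have hm2 : (1:ℝ) ≤ (m:ℝ)^2 := by nlinarith [hmr]
    have hkr : (1:ℝ) ≤ (k:ℝ) := by exact_mod_cast hk
    exact scalar_ineq c σ L Q (S:ℝ) (D:ℝ) (k:ℝ) ((m:ℝ)^2) (Real.log 2)
      hcpos hσ hLnn hQ0 hLkey hm2 hkr hS36 (by linarith) hln2' hSD hD0
  have hRHS : Real.exp (-((k:ℝ)+3) * Real.log 2) = (1/8) * (1/2)^k := by
    have h9 : (-((k:ℝ)+3)) * Real.log 2 = ((k+3:ℕ):ℝ) * (- Real.log 2) := by push_cast; ring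
    rw [h9, Real.exp_nat_mul, Real.exp_neg, Real.exp_log (by norm_num : (0:ℝ) < 2)]
    rw [pow_add]
    norm_num
    ring
  calc (((N).choose (k*S) : ℝ)) * (((N).choose S : ℝ)) * (((AF M D m).card : ℝ))^S
      * Real.exp (-(c * m^2 * k * S^2 / D))
      ≤ Real.exp (((k:ℝ)*S) * (1 + σ) + (S:ℝ) * (1 + σ) + (S:ℝ) * L
          + -(c * m^2 * k * S^2 / D)) := hchain
    _ ≤ Real.exp (-((k:ℝ)+3) * Real.log 2) := by
        apply Real.exp_le_exp.2
        linarith [hscalar]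
    _ = (1/8) * (1/2)^k := hRHS

lemma card_biUnion_le_real {β γ : Type*} [DecidableEq β] [DecidableEq γ] (s : Finset β)
    (f : β → Finset γ) (E : ℝ) (h : ∀ b ∈ s, ((f b).card : ℝ) ≤ E) :
    ((s.biUnion f).card : ℝ) ≤ s.card * E := by
  have h1 : ((s.biUnion f).card : ℝ) ≤ ∑ b ∈ s, ((f b).card : ℝ) := by
    exact_mod_cast Finset.card_biUnion_le
  calc ((s.biUnion f).card : ℝ) ≤ ∑ b ∈ s, ((f b).card : ℝ) := h1
    _ ≤ ∑ _b ∈ s, E := Finset.sum_le_sum h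
    _ = s.card * E := by rw [Finset.sum_const, nsmul_eq_mul]

lemma AFam_card {N M D m : ℕ} (B : Finset (Fin N)) :
    (Fintype.piFinset (fun v : Fin N => if v ∈ B then AF M D m else {∅})).card
      = (AF M D m).card ^ B.card := by
  classical
  rw [Fintype.card_piFinset]
  have h1 : ∀ v : Fin N, (if v ∈ B then AF M D m else {∅}).card
      = if v ∈ B then (AF M D m).card else 1 := by
    intro v; split <;> simp
  simp_rw [h1]
  rw [Finset.prod_ite, Finset.prod_const, Finset.prod_const, one_pow, mul_one,
    Finset.filter_univ_mem]


set_option maxHeartbeats 2000000 in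
theorem stmt_15 (n m S D : ℕ) (hS : 0 < S) (hD : 0 < D)
    (h : 12 * (D : ℝ) + 3 * (1 + Real.log D) * (2 ^ m : ℝ) * m ^ 2
        + 6 * D * Real.log ((2 ^ n : ℝ) / S) ≤ (S : ℝ)) :
    ∃ T : Fin (2 ^ n) × Fin (2 ^ n) → Fin (2 ^ m),
      RainbowBalanced (2 ^ n) (2 ^ m) S D m T := by
  classical
  have hM0 : 0 < 2^m := Nat.pow_pos (n := m) (by norm_num)
  have hN0 : 0 < 2^n := Nat.pow_pos (n := n) (by norm_num)
  have hD0 : (0:ℝ) < D := by exact_mod_cast hD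
  set N : ℕ := 2^n with hNdef
  set M : ℕ := 2^m with hMdef
  -- vacuous case : S > N
  by_cases hNS : N < S
  · refine ⟨fun _ => ⟨0, hM0⟩, ?_, ?_⟩
    · intro B₁ B₂ _ hB₂ A _
      exfalso
      have := Finset.card_le_univ B₂
      rw [Fintype.card_fin] at this
      omega
    · intro B₁ B₂ hB₁ _ A _
      exfalso
      have := Finset.card_le_univ B₁
      rw [Fintype.card_fin] at this
      omega
  -- trivial case : D ≤ 2 m²
  by_cases hDm : D ≤ 2 * m^2
  · have key : ∀ (B₁ B₂ : Finset (Fin N))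
        (cnt : ℕ), cnt ≤ (B₁ ×ˢ B₂).card →
        (cnt : ℝ) ≤ 2 * m ^ 2 * B₁.card * B₂.card / D := by
      intro B₁ B₂ cnt hcnt
      rw [le_div_iff₀ hD0]
      have h1 : (cnt:ℝ) ≤ (B₁.card : ℝ) * B₂.card := by
        have h1x : cnt ≤ B₁.card * B₂.card := by
          rw [← Finset.card_product]; exact hcnt
        exact_mod_cast h1x
      have h2 : (D:ℝ) ≤ 2 * m^2 := by exact_mod_cast hDm
      have h3 : (0:ℝ) ≤ (B₁.card : ℝ) * B₂.card := by positivity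
      have h4 : (0:ℝ) ≤ (cnt:ℝ) := by positivity
      nlinarith [mul_le_mul_of_nonneg_left h2 h3]
    refine ⟨fun _ => ⟨0, hM0⟩, ?_, ?_⟩
    · intro B₁ B₂ _ _ A _
      exact key B₁ B₂ _ (Finset.card_filter_le _ _)
    · intro B₁ B₂ _ _ A _
      exact key B₁ B₂ _ (Finset.card_filter_le _ _)
  -- main case
  push_neg at hNS hDm
  set Ω := (Fin N × Fin N → Fin M) with hΩ
  have hΩcard : 0 < Fintype.card Ω := by
    apply Fintype.card_pos_iff.2
    exact ⟨fun _ => ⟨0, hM0⟩⟩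
  have hΩr : (0:ℝ) < Fintype.card Ω := by exact_mod_cast hΩcard
  set c : ℝ := 2*Real.log 2 - 1 with hc
  set badC : Finset (Fin N) → Finset (Fin N) → (Fin N → Finset (Fin M)) → Finset Ω :=
    fun B₁ B₂ A => Finset.univ.filter (fun T =>
      ¬((properCountCols T B₁ B₂ A : ℝ) ≤ 2 * m ^ 2 * B₁.card * B₂.card / D)) with hbadC
  set badR : Finset (Fin N) → Finset (Fin N) → (Fin N → Finset (Fin M)) → Finset Ω :=
    fun B₁ B₂ A => Finset.univ.filter (fun T =>
      ¬((properCountRows T B₁ B₂ A : ℝ) ≤ 2 * m ^ 2 * B₁.card * B₂.card / D)) with hbadR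
  set AFam : Finset (Fin N) → Finset (Fin N → Finset (Fin M)) :=
    fun B => Fintype.piFinset (fun v => if v ∈ B then AF M D m else {∅}) with hAFam
  set UC : Finset Ω := (Finset.Icc 1 N).biUnion fun k =>
    (Finset.powersetCard (k*S) Finset.univ).biUnion fun B₁ =>
      (Finset.powersetCard S Finset.univ).biUnion fun B₂ =>
        (AFam B₂).biUnion fun A => badC B₁ B₂ A with hUC
  set UR : Finset Ω := (Finset.Icc 1 N).biUnion fun k =>
    (Finset.powersetCard S Finset.univ).biUnion fun B₁ =>
      (Finset.powersetCard (k*S) Finset.univ).biUnion fun B₂ =>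
        (AFam B₁).biUnion fun A => badR B₁ B₂ A with hUR
  -- the subset property
  have hsub : Finset.univ.filter (fun T => ¬ RainbowBalanced N M S D m T) ⊆ UC ∪ UR := by
    intro T hT
    rw [Finset.mem_filter] at hT
    have hT' := hT.2
    rw [RainbowBalanced, not_and_or] at hT'
    rcases hT' with hT' | hT'
    · -- bad for columns
      push_neg at hT'
      obtain ⟨B₁, B₂, ⟨k, hk, hB₁c⟩, hB₂c, A, hA, hbad⟩ := hT'
      apply Finset.mem_union_left
      rw [hUC, Finset.mem_biUnion]
      have hB₁N : k * S ≤ N := by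
        have := Finset.card_le_univ B₁
        rw [Fintype.card_fin, hB₁c] at this
        exact this
      refine ⟨k, Finset.mem_Icc.2 ⟨hk, ?_⟩, ?_⟩
      · calc k ≤ k * S := Nat.le_mul_of_pos_right k hS
          _ ≤ N := hB₁N
      rw [Finset.mem_biUnion]
      refine ⟨B₁, Finset.mem_powersetCard.2 ⟨Finset.subset_univ _, hB₁c⟩, ?_⟩
      rw [Finset.mem_biUnion]
      refine ⟨B₂, Finset.mem_powersetCard.2 ⟨Finset.subset_univ _, hB₂c⟩, ?_⟩
      rw [Finset.mem_biUnion]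
      refine ⟨fun v => if v ∈ B₂ then A v else ∅, ?_, ?_⟩
      · rw [hAFam]
        rw [Fintype.mem_piFinset]
        intro v
        by_cases hv : v ∈ B₂
        · rw [if_pos hv, if_pos hv]
          exact mem_AF.2 (hA v hv)
        · rw [if_neg hv, if_neg hv]
          exact Finset.mem_singleton_self _
      · rw [hbadC]
        rw [Finset.mem_filter]
        refine ⟨Finset.mem_univ _, ?_⟩
        have hcong : properCountCols T B₁ B₂ (fun v => if v ∈ B₂ then A v else ∅)
            = properCountCols T B₁ B₂ A := by
          unfold properCountCols
          congr 1
          apply Finset.filter_congr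
          intro cc hcc
          rcases Finset.mem_product.1 hcc with ⟨_, h2⟩
          simp [h2]
        rw [hcong]
        exact not_le.2 hbad
    · -- bad for rows
      push_neg at hT'
      obtain ⟨B₁, B₂, hB₁c, ⟨k, hk, hB₂c⟩, A, hA, hbad⟩ := hT'
      apply Finset.mem_union_right
      rw [hUR, Finset.mem_biUnion]
      have hB₂N : k * S ≤ N := by
        have := Finset.card_le_univ B₂
        rw [Fintype.card_fin, hB₂c] at this
        exact this
      refine ⟨k, Finset.mem_Icc.2 ⟨hk, ?_⟩, ?_⟩
      · calc k ≤ k * S := Nat.le_mul_of_pos_right k hS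
          _ ≤ N := hB₂N
      rw [Finset.mem_biUnion]
      refine ⟨B₁, Finset.mem_powersetCard.2 ⟨Finset.subset_univ _, hB₁c⟩, ?_⟩
      rw [Finset.mem_biUnion]
      refine ⟨B₂, Finset.mem_powersetCard.2 ⟨Finset.subset_univ _, hB₂c⟩, ?_⟩
      rw [Finset.mem_biUnion]
      refine ⟨fun v => if v ∈ B₁ then A v else ∅, ?_, ?_⟩
      · rw [hAFam]
        rw [Fintype.mem_piFinset]
        intro v
        by_cases hv : v ∈ B₁
        · rw [if_pos hv, if_pos hv]
          exact mem_AF.2 (hA v hv)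
        · rw [if_neg hv, if_neg hv]
          exact Finset.mem_singleton_self _
      · rw [hbadR]
        rw [Finset.mem_filter]
        refine ⟨Finset.mem_univ _, ?_⟩
        have hcong : properCountRows T B₁ B₂ (fun v => if v ∈ B₁ then A v else ∅)
            = properCountRows T B₁ B₂ A := by
          unfold properCountRows
          congr 1
          apply Finset.filter_congr
          intro cc hcc
          rcases Finset.mem_product.1 hcc with ⟨h1, _⟩
          simp [h1]
        rw [hcong]
        exact not_le.2 hbad
  -- tail bounds for the basic bad events
  have hbadC_le : ∀ k B₁ B₂ A, B₁.card = k * S → B₂.card = S → A ∈ AFam B₂ →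
      ((badC B₁ B₂ A).card : ℝ)
        ≤ (Fintype.card Ω : ℝ) * Real.exp (-(c * m^2 * k * S^2 / D)) := by
    intro k B₁ B₂ A hB₁c hB₂c hAmem
    have hsub2 : badC B₁ B₂ A ⊆ Finset.univ.filter (fun T : Ω =>
        (2 * m ^ 2 * (B₁.card:ℝ) * B₂.card / D) ≤
          (((B₁ ×ˢ B₂).filter (fun cc => T cc ∈ (fun cc : Fin N × Fin N => A cc.2) cc)).card : ℝ)) := by
      intro T hT
      rw [hbadC, Finset.mem_filter] at hT
      rw [Finset.mem_filter]
      refine ⟨Finset.mem_univ _, ?_⟩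
      exact le_of_lt (not_le.1 hT.2)
    have hp : ∀ cc ∈ B₁ ×ˢ B₂, (((fun cc : Fin N × Fin N => A cc.2) cc).card : ℝ)
        ≤ ((m:ℝ)^2 / D) * M := by
      intro cc hcc
      rcases Finset.mem_product.1 hcc with ⟨_, h2⟩
      have hAcc : A cc.2 ∈ AF M D m := by
        rw [hAFam, Fintype.mem_piFinset] at hAmem
        have := hAmem cc.2
        rw [if_pos h2] at this
        exact this
      have := (mem_AF.1 hAcc).2
      calc ((A cc.2).card : ℝ) ≤ (M:ℝ)/D * m^2 := this
        _ = ((m:ℝ)^2 / D) * M := by ring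
    calc ((badC B₁ B₂ A).card : ℝ)
        ≤ ((Finset.univ.filter (fun T : Ω =>
          (2 * m ^ 2 * (B₁.card:ℝ) * B₂.card / D) ≤
            (((B₁ ×ˢ B₂).filter (fun cc => T cc ∈ (fun cc : Fin N × Fin N => A cc.2) cc)).card : ℝ))).card : ℝ) := by
          exact_mod_cast Finset.card_le_card hsub2
      _ ≤ (Fintype.card Ω : ℝ) * Real.exp (((m:ℝ)^2/D) * ((B₁ ×ˢ B₂).card)
            - (2 * m ^ 2 * (B₁.card:ℝ) * B₂.card / D) * Real.log 2) :=
          tail_bound hM0 (B₁ ×ˢ B₂) (fun cc => A cc.2) ((m:ℝ)^2/D)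
            (2 * m ^ 2 * (B₁.card:ℝ) * B₂.card / D) (by positivity) hp
      _ = (Fintype.card Ω : ℝ) * Real.exp (-(c * m^2 * k * S^2 / D)) := by
          congr 1
          rw [Finset.card_product, hB₁c, hB₂c, hc]
          push_cast
          ring
  have hbadR_le : ∀ k B₁ B₂ A, B₁.card = S → B₂.card = k * S → A ∈ AFam B₁ →
      ((badR B₁ B₂ A).card : ℝ)
        ≤ (Fintype.card Ω : ℝ) * Real.exp (-(c * m^2 * k * S^2 / D)) := by
    intro k B₁ B₂ A hB₁c hB₂c hAmem
    have hsub2 : badR B₁ B₂ A ⊆ Finset.univ.filter (fun T : Ω =>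
        (2 * m ^ 2 * (B₁.card:ℝ) * B₂.card / D) ≤
          (((B₁ ×ˢ B₂).filter (fun cc => T cc ∈ (fun cc : Fin N × Fin N => A cc.1) cc)).card : ℝ)) := by
      intro T hT
      rw [hbadR, Finset.mem_filter] at hT
      rw [Finset.mem_filter]
      refine ⟨Finset.mem_univ _, ?_⟩
      exact le_of_lt (not_le.1 hT.2)
    have hp : ∀ cc ∈ B₁ ×ˢ B₂, (((fun cc : Fin N × Fin N => A cc.1) cc).card : ℝ)
        ≤ ((m:ℝ)^2 / D) * M := by
      intro cc hcc
      rcases Finset.mem_product.1 hcc with ⟨h1, _⟩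
      have hAcc : A cc.1 ∈ AF M D m := by
        rw [hAFam, Fintype.mem_piFinset] at hAmem
        have := hAmem cc.1
        rw [if_pos h1] at this
        exact this
      have := (mem_AF.1 hAcc).2
      calc ((A cc.1).card : ℝ) ≤ (M:ℝ)/D * m^2 := this
        _ = ((m:ℝ)^2 / D) * M := by ring
    calc ((badR B₁ B₂ A).card : ℝ)
        ≤ ((Finset.univ.filter (fun T : Ω =>
          (2 * m ^ 2 * (B₁.card:ℝ) * B₂.card / D) ≤
            (((B₁ ×ˢ B₂).filter (fun cc => T cc ∈ (fun cc : Fin N × Fin N => A cc.1) cc)).card : ℝ))).card : ℝ) := by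
          exact_mod_cast Finset.card_le_card hsub2
      _ ≤ (Fintype.card Ω : ℝ) * Real.exp (((m:ℝ)^2/D) * ((B₁ ×ˢ B₂).card)
            - (2 * m ^ 2 * (B₁.card:ℝ) * B₂.card / D) * Real.log 2) :=
          tail_bound hM0 (B₁ ×ˢ B₂) (fun cc => A cc.1) ((m:ℝ)^2/D)
            (2 * m ^ 2 * (B₁.card:ℝ) * B₂.card / D) (by positivity) hp
      _ = (Fintype.card Ω : ℝ) * Real.exp (-(c * m^2 * k * S^2 / D)) := by
          congr 1
          rw [Finset.card_product, hB₁c, hB₂c, hc]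
          push_cast
          ring
  -- per-k bound for UC and UR
  have hperk : ∀ k ∈ Finset.Icc 1 N,
      ((N.choose (k*S) : ℝ)) * ((N.choose S : ℝ)) * (((AF M D m).card : ℝ))^S
        * ((Fintype.card Ω : ℝ) * Real.exp (-(c * m^2 * k * S^2 / D)))
      ≤ (Fintype.card Ω : ℝ) * ((1/8) * (1/2)^k) := by
    intro k hkmem
    have hk1 : 1 ≤ k := (Finset.mem_Icc.1 hkmem).1
    have := per_k n m S D k hS hDm hk1 hNS h
    calc ((N.choose (k*S) : ℝ)) * ((N.choose S : ℝ)) * (((AF M D m).card : ℝ))^S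
        * ((Fintype.card Ω : ℝ) * Real.exp (-(c * m^2 * k * S^2 / D)))
        = (Fintype.card Ω : ℝ) * (((N.choose (k*S) : ℝ)) * ((N.choose S : ℝ))
            * (((AF M D m).card : ℝ))^S * Real.exp (-(c * m^2 * k * S^2 / D))) := by ring
      _ ≤ (Fintype.card Ω : ℝ) * ((1/8) * (1/2)^k) := by
          apply mul_le_mul_of_nonneg_left _ (le_of_lt hΩr)
          rw [hc]
          exact this
  -- cardinality of UC
  have hUCle : (UC.card : ℝ) ≤ (Fintype.card Ω : ℝ) * (1/4) := by
    have h1 : (UC.card : ℝ) ≤ ∑ k ∈ Finset.Icc 1 N,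
        ((((Finset.powersetCard (k*S) (Finset.univ : Finset (Fin N))).biUnion fun B₁ =>
          (Finset.powersetCard S Finset.univ).biUnion fun B₂ =>
            (AFam B₂).biUnion fun A => badC B₁ B₂ A).card : ℝ)) := by
      rw [hUC]
      exact_mod_cast Finset.card_biUnion_le
    have h2 : ∀ k ∈ Finset.Icc 1 N,
        ((((Finset.powersetCard (k*S) (Finset.univ : Finset (Fin N))).biUnion fun B₁ =>
          (Finset.powersetCard S Finset.univ).biUnion fun B₂ =>
            (AFam B₂).biUnion fun A => badC B₁ B₂ A).card : ℝ))
        ≤ (Fintype.card Ω : ℝ) * ((1/8) * (1/2)^k) := by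
      intro k hkmem
      have hE : (0:ℝ) ≤ (Fintype.card Ω : ℝ) * Real.exp (-(c * m^2 * k * S^2 / D)) := by
        positivity
      have step : ((((Finset.powersetCard (k*S) (Finset.univ : Finset (Fin N))).biUnion fun B₁ =>
          (Finset.powersetCard S Finset.univ).biUnion fun B₂ =>
            (AFam B₂).biUnion fun A => badC B₁ B₂ A).card : ℝ))
          ≤ (N.choose (k*S) : ℝ) * ((N.choose S : ℝ) * ((((AF M D m).card : ℝ))^S
              * ((Fintype.card Ω : ℝ) * Real.exp (-(c * m^2 * k * S^2 / D))))) := by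
        have hcard1 : ((Finset.powersetCard (k*S) (Finset.univ : Finset (Fin N))).card : ℝ)
            = (N.choose (k*S) : ℝ) := by
          rw [Finset.card_powersetCard, Finset.card_univ, Fintype.card_fin]
        have hcard2 : ((Finset.powersetCard S (Finset.univ : Finset (Fin N))).card : ℝ)
            = (N.choose S : ℝ) := by
          rw [Finset.card_powersetCard, Finset.card_univ, Fintype.card_fin]
        rw [← hcard1]
        apply card_biUnion_le_real
        intro B₁ hB₁
        rw [← hcard2]
        apply card_biUnion_le_real
        intro B₂ hB₂
        have hB₂c : B₂.card = S := (Finset.mem_powersetCard.1 hB₂).2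
        have hAFamc : ((AFam B₂).card : ℝ) = (((AF M D m).card : ℝ))^S := by
          rw [hAFam]
          rw [show (Fintype.piFinset (fun v => if v ∈ B₂ then AF M D m else {∅})).card
            = (AF M D m).card ^ B₂.card from AFam_card B₂, hB₂c]
          push_cast
          ring
        rw [← hAFamc]
        apply card_biUnion_le_real
        intro A hA
        exact hbadC_le k B₁ B₂ A (Finset.mem_powersetCard.1 hB₁).2 hB₂c hA
      exact le_trans step (by
        have := hperk k hkmem
        calc (N.choose (k*S) : ℝ) * ((N.choose S : ℝ) * ((((AF M D m).card : ℝ))^S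
              * ((Fintype.card Ω : ℝ) * Real.exp (-(c * m^2 * k * S^2 / D)))))
            = ((N.choose (k*S) : ℝ)) * ((N.choose S : ℝ)) * (((AF M D m).card : ℝ))^S
              * ((Fintype.card Ω : ℝ) * Real.exp (-(c * m^2 * k * S^2 / D))) := by ring
          _ ≤ (Fintype.card Ω : ℝ) * ((1/8) * (1/2)^k) := this)
    have h3 : ∑ k ∈ Finset.Icc 1 N, (Fintype.card Ω : ℝ) * ((1/8) * (1/2)^k)
        ≤ (Fintype.card Ω : ℝ) * (1/4) := by
      rw [← Finset.mul_sum]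
      apply mul_le_mul_of_nonneg_left _ (le_of_lt hΩr)
      rw [← Finset.mul_sum]
      have hgeo : ∑ k ∈ Finset.Icc 1 N, ((1:ℝ)/2)^k ≤ 2 := by
        calc ∑ k ∈ Finset.Icc 1 N, ((1:ℝ)/2)^k
            ≤ ∑ k ∈ Finset.range (N+1), ((1:ℝ)/2)^k := by
              apply Finset.sum_le_sum_of_subset_of_nonneg
              · intro x hx
                rw [Finset.mem_Icc] at hx
                rw [Finset.mem_range]
                omega
              · intro i _ _; positivity
          _ = (((1:ℝ)/2)^(N+1) - 1)/((1/2) - 1) := geom_sum_eq (by norm_num) (N+1)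
          _ ≤ 2 := by
              rw [div_le_iff_of_neg (by norm_num : ((1:ℝ)/2) - 1 < 0)]
              have : (0:ℝ) ≤ ((1:ℝ)/2)^(N+1) := by positivity
              linarith
      linarith
    calc (UC.card : ℝ) ≤ ∑ k ∈ Finset.Icc 1 N,
        ((((Finset.powersetCard (k*S) (Finset.univ : Finset (Fin N))).biUnion fun B₁ =>
          (Finset.powersetCard S Finset.univ).biUnion fun B₂ =>
            (AFam B₂).biUnion fun A => badC B₁ B₂ A).card : ℝ)) := h1
      _ ≤ ∑ k ∈ Finset.Icc 1 N, (Fintype.card Ω : ℝ) * ((1/8) * (1/2)^k) :=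
          Finset.sum_le_sum h2
      _ ≤ (Fintype.card Ω : ℝ) * (1/4) := h3
  -- cardinality of UR (symmetric)
  have hURle : (UR.card : ℝ) ≤ (Fintype.card Ω : ℝ) * (1/4) := by
    have h1 : (UR.card : ℝ) ≤ ∑ k ∈ Finset.Icc 1 N,
        ((((Finset.powersetCard S (Finset.univ : Finset (Fin N))).biUnion fun B₁ =>
          (Finset.powersetCard (k*S) Finset.univ).biUnion fun B₂ =>
            (AFam B₁).biUnion fun A => badR B₁ B₂ A).card : ℝ)) := by
      rw [hUR]
      exact_mod_cast Finset.card_biUnion_le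
    have h2 : ∀ k ∈ Finset.Icc 1 N,
        ((((Finset.powersetCard S (Finset.univ : Finset (Fin N))).biUnion fun B₁ =>
          (Finset.powersetCard (k*S) Finset.univ).biUnion fun B₂ =>
            (AFam B₁).biUnion fun A => badR B₁ B₂ A).card : ℝ))
        ≤ (Fintype.card Ω : ℝ) * ((1/8) * (1/2)^k) := by
      intro k hkmem
      have step : ((((Finset.powersetCard S (Finset.univ : Finset (Fin N))).biUnion fun B₁ =>
          (Finset.powersetCard (k*S) Finset.univ).biUnion fun B₂ =>
            (AFam B₁).biUnion fun A => badR B₁ B₂ A).card : ℝ))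
          ≤ (N.choose S : ℝ) * ((N.choose (k*S) : ℝ) * ((((AF M D m).card : ℝ))^S
              * ((Fintype.card Ω : ℝ) * Real.exp (-(c * m^2 * k * S^2 / D))))) := by
        have hcard1 : ((Finset.powersetCard (k*S) (Finset.univ : Finset (Fin N))).card : ℝ)
            = (N.choose (k*S) : ℝ) := by
          rw [Finset.card_powersetCard, Finset.card_univ, Fintype.card_fin]
        have hcard2 : ((Finset.powersetCard S (Finset.univ : Finset (Fin N))).card : ℝ)
            = (N.choose S : ℝ) := by
          rw [Finset.card_powersetCard, Finset.card_univ, Fintype.card_fin]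
        rw [← hcard2]
        apply card_biUnion_le_real
        intro B₁ hB₁
        have hB₁c : B₁.card = S := (Finset.mem_powersetCard.1 hB₁).2
        rw [← hcard1]
        apply card_biUnion_le_real
        intro B₂ hB₂
        have hAFamc : ((AFam B₁).card : ℝ) = (((AF M D m).card : ℝ))^S := by
          rw [hAFam]
          rw [show (Fintype.piFinset (fun v => if v ∈ B₁ then AF M D m else {∅})).card
            = (AF M D m).card ^ B₁.card from AFam_card B₁, hB₁c]
          push_cast
          ring
        rw [← hAFamc]
        apply card_biUnion_le_real
        intro A hA
        exact hbadR_le k B₁ B₂ A hB₁c (Finset.mem_powersetCard.1 hB₂).2 hA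
      exact le_trans step (by
        have := hperk k hkmem
        calc (N.choose S : ℝ) * ((N.choose (k*S) : ℝ) * ((((AF M D m).card : ℝ))^S
              * ((Fintype.card Ω : ℝ) * Real.exp (-(c * m^2 * k * S^2 / D)))))
            = ((N.choose (k*S) : ℝ)) * ((N.choose S : ℝ)) * (((AF M D m).card : ℝ))^S
              * ((Fintype.card Ω : ℝ) * Real.exp (-(c * m^2 * k * S^2 / D))) := by ring
          _ ≤ (Fintype.card Ω : ℝ) * ((1/8) * (1/2)^k) := this)
    have h3 : ∑ k ∈ Finset.Icc 1 N, (Fintype.card Ω : ℝ) * ((1/8) * (1/2)^k)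
        ≤ (Fintype.card Ω : ℝ) * (1/4) := by
      rw [← Finset.mul_sum]
      apply mul_le_mul_of_nonneg_left _ (le_of_lt hΩr)
      rw [← Finset.mul_sum]
      have hgeo : ∑ k ∈ Finset.Icc 1 N, ((1:ℝ)/2)^k ≤ 2 := by
        calc ∑ k ∈ Finset.Icc 1 N, ((1:ℝ)/2)^k
            ≤ ∑ k ∈ Finset.range (N+1), ((1:ℝ)/2)^k := by
              apply Finset.sum_le_sum_of_subset_of_nonneg
              · intro x hx
                rw [Finset.mem_Icc] at hx
                rw [Finset.mem_range]
                omega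
              · intro i _ _; positivity
          _ = (((1:ℝ)/2)^(N+1) - 1)/((1/2) - 1) := geom_sum_eq (by norm_num) (N+1)
          _ ≤ 2 := by
              rw [div_le_iff_of_neg (by norm_num : ((1:ℝ)/2) - 1 < 0)]
              have : (0:ℝ) ≤ ((1:ℝ)/2)^(N+1) := by positivity
              linarith
      linarith
    calc (UR.card : ℝ) ≤ ∑ k ∈ Finset.Icc 1 N,
        ((((Finset.powersetCard S (Finset.univ : Finset (Fin N))).biUnion fun B₁ =>
          (Finset.powersetCard (k*S) Finset.univ).biUnion fun B₂ =>
            (AFam B₁).biUnion fun A => badR B₁ B₂ A).card : ℝ)) := h1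
      _ ≤ ∑ k ∈ Finset.Icc 1 N, (Fintype.card Ω : ℝ) * ((1/8) * (1/2)^k) :=
          Finset.sum_le_sum h2
      _ ≤ (Fintype.card Ω : ℝ) * (1/4) := h3
  -- conclusion
  have hlt : ((Finset.univ.filter (fun T => ¬ RainbowBalanced N M S D m T)).card : ℝ)
      < (Fintype.card Ω : ℝ) := by
    calc ((Finset.univ.filter (fun T => ¬ RainbowBalanced N M S D m T)).card : ℝ)
        ≤ ((UC ∪ UR).card : ℝ) := by exact_mod_cast Finset.card_le_card hsub
      _ ≤ (UC.card : ℝ) + UR.card := by exact_mod_cast Finset.card_union_le UC UR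
      _ ≤ (Fintype.card Ω : ℝ) * (1/4) + (Fintype.card Ω : ℝ) * (1/4) := by
          linarith [hUCle, hURle]
      _ < (Fintype.card Ω : ℝ) := by linarith
  by_contra hcon
  push_neg at hcon
  have hall : Finset.univ.filter (fun T => ¬ RainbowBalanced N M S D m T)
      = (Finset.univ : Finset Ω) := by
    apply Finset.filter_true_of_mem
    intro T _
    exact hcon T
  rw [hall, Finset.card_univ] at hlt
  exact lt_irrefl _ hlt
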